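/- Let 0 < Δ < 1/2 and μ ≥ 0 be real. Then the series ∑_{n=0}^∞ Γ(Δ+n+μ)Γ(Δ+n) / (Γ(1+n+μ)Γ(1+n)) converges and equals Γ(Δ)² Γ(Δ+μ) / (2 cos(πΔ) Γ(2Δ) Γ(1+μ−Δ)). -/

import Mathlib

open MeasureTheory Set Real
open scoped ENNReal Nat

lemma expSum (t : ℝ) : HasSum (fun n : ℕ => t ^ n / (Nat.factorial n : ℝ)) (Real.exp t) := by
  rw [Real.exp_eq_exp_ℝ]
  exact NormedSpace.expSeries_div_hasSum_exp t

lemma scaledGammaInt {p c : ℝ} (hp : 0 < p) (hc : 0 < c) :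
    IntegrableOn (fun u : ℝ => Real.exp (-(c*u)) * u ^ (p-1)) (Ioi 0) := by
  have h := Real.GammaIntegral_convergent hp
  rw [show (0:ℝ) = c * 0 by ring, ← integrableOn_Ioi_comp_mul_left_iff _ _ hc] at h
  have h' : IntegrableOn (fun x : ℝ => c ^ (1-p) * (Real.exp (-(c*x)) * (c*x) ^ (p-1))) (Ioi 0) :=
    h.const_mul _
  refine h'.congr_fun (fun u hu => ?_) measurableSet_Ioi
  show c ^ (1-p) * (Real.exp (-(c*u)) * (c*u) ^ (p-1)) = _
  rw [Real.mul_rpow hc.le (le_of_lt hu)]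
  have hone : c ^ (1-p) * c ^ (p-1) = 1 := by
    rw [← Real.rpow_add hc]; norm_num
  linear_combination Real.exp (-(c*u)) * u ^ (p-1) * hone

lemma scaledGammaVal {p c : ℝ} (hp : 0 < p) (hc : 0 < c) :
    ∫ u in Ioi (0:ℝ), Real.exp (-(c*u)) * u ^ (p-1) = Real.Gamma p / c ^ p := by
  have h := MeasureTheory.integral_comp_mul_left_Ioi
    (fun x : ℝ => Real.exp (-x) * x ^ (p-1)) 0 hc
  rw [mul_zero, ← Real.Gamma_eq_integral hp] at h
  have h2 : ∫ u in Ioi (0:ℝ), Real.exp (-(c*u)) * (c*u) ^ (p-1)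
      = c⁻¹ * Real.Gamma p := by simpa using h
  have h3 : ∫ u in Ioi (0:ℝ), Real.exp (-(c*u)) * (c*u) ^ (p-1)
      = c ^ (p-1) * ∫ u in Ioi (0:ℝ), Real.exp (-(c*u)) * u ^ (p-1) := by
    rw [← integral_const_mul]
    refine setIntegral_congr_fun measurableSet_Ioi (fun u hu => ?_)
    show Real.exp (-(c*u)) * (c*u) ^ (p-1) = _
    rw [Real.mul_rpow hc.le (le_of_lt hu)]; ring
  rw [h3] at h2
  have hcp : c ^ p = c ^ (p-1) * c := by
    rw [← Real.rpow_add_one hc.ne']; ring_nf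
  rw [eq_div_iff (Real.rpow_pos_of_pos hc p).ne', hcp]
  field_simp at h2
  linear_combination h2

lemma betaCongr {p q : ℝ} : ∀ t ∈ Ioo (0:ℝ) 1,
    ((t:ℂ) ^ ((p:ℂ)-1) * ((1:ℂ)-(t:ℂ)) ^ ((q:ℂ)-1)) = ((t ^ (p-1) * (1-t) ^ (q-1) : ℝ) : ℂ) := by
  intro t ht
  have h1 : ((p:ℂ)-1) = ((p-1 : ℝ) : ℂ) := by push_cast; ring
  have h2 : ((q:ℂ)-1) = ((q-1 : ℝ) : ℂ) := by push_cast; ring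
  have h3 : ((1:ℂ)-(t:ℂ)) = ((1-t : ℝ) : ℂ) := by push_cast; ring
  rw [h1, h2, h3, ← Complex.ofReal_cpow ht.1.le, ← Complex.ofReal_cpow (by linarith [ht.2] : (0:ℝ) ≤ 1-t),
    ← Complex.ofReal_mul]

lemma betaIntEq {p q : ℝ} (hp : 0 < p) (hq : 0 < q) :
    Complex.betaIntegral p q = ((∫ t in Ioo (0:ℝ) 1, t ^ (p-1) * (1-t) ^ (q-1) : ℝ) : ℂ) := by
  rw [Complex.betaIntegral, intervalIntegral.integral_of_le zero_le_one,
    MeasureTheory.integral_Ioc_eq_integral_Ioo]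
  exact (setIntegral_congr_fun measurableSet_Ioo (fun t ht => betaCongr t ht)).trans
    integral_ofReal

lemma betaRealVal {p q : ℝ} (hp : 0 < p) (hq : 0 < q) :
    ∫ t in Ioo (0:ℝ) 1, t ^ (p-1) * (1-t) ^ (q-1)
      = Real.Gamma p * Real.Gamma q / Real.Gamma (p+q) := by
  have h := Complex.Gamma_mul_Gamma_eq_betaIntegral
    (show 0 < (p:ℂ).re by simpa using hp) (show 0 < (q:ℂ).re by simpa using hq)
  rw [betaIntEq hp hq] at h
  have hpq : ((p:ℂ) + q) = ((p + q : ℝ) : ℂ) := by push_cast; ring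
  rw [hpq, Complex.Gamma_ofReal, Complex.Gamma_ofReal, Complex.Gamma_ofReal,
    ← Complex.ofReal_mul, ← Complex.ofReal_mul] at h
  have h' := Complex.ofReal_inj.mp h
  rw [eq_div_iff (Real.Gamma_pos_of_pos (by linarith)).ne']
  linarith [h']

lemma betaRealInt {p q : ℝ} (hp : 0 < p) (hq : 0 < q) :
    IntegrableOn (fun t : ℝ => t ^ (p-1) * (1-t) ^ (q-1)) (Ioo 0 1) := by
  have h := Complex.betaIntegral_convergent
    (show 0 < (p:ℂ).re by simpa using hp) (show 0 < (q:ℂ).re by simpa using hq)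
  have h2 : IntegrableOn (fun x : ℝ => (x:ℂ) ^ ((p:ℂ)-1) * ((1:ℂ)-(x:ℂ)) ^ ((q:ℂ)-1)) (Ioo 0 1) := by
    refine ((intervalIntegrable_iff_integrableOn_Ioc_of_le zero_le_one).mp h).mono_set Ioo_subset_Ioc_self
  have h3 : IntegrableOn (fun x : ℝ => ((x:ℂ) ^ ((p:ℂ)-1) * ((1:ℂ)-(x:ℂ)) ^ ((q:ℂ)-1)).re)
      (Ioo 0 1) := h2.re
  refine h3.congr_fun (fun t ht => ?_) measurableSet_Ioo
  show (((t:ℂ) ^ ((p:ℂ)-1) * ((1:ℂ)-(t:ℂ)) ^ ((q:ℂ)-1)).re) = _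
  rw [betaCongr t ht, Complex.ofReal_re]

lemma scaledGammaL {p c : ℝ} (hp : 0 < p) (hc : 0 < c) :
    ∫⁻ u in Ioi (0:ℝ), ENNReal.ofReal (Real.exp (-(c*u)) * u ^ (p-1))
      = ENNReal.ofReal (Real.Gamma p / c ^ p) := by
  rw [← ofReal_integral_eq_lintegral_ofReal (scaledGammaInt hp hc)
    ((ae_restrict_mem measurableSet_Ioi).mono fun u hu => mul_nonneg (Real.exp_pos _).le (Real.rpow_nonneg (le_of_lt hu) _)),
    scaledGammaVal hp hc]

lemma betaL {p q : ℝ} (hp : 0 < p) (hq : 0 < q) :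
    ∫⁻ t in Ioo (0:ℝ) 1, ENNReal.ofReal (t ^ (p-1) * (1-t) ^ (q-1))
      = ENNReal.ofReal (Real.Gamma p * Real.Gamma q / Real.Gamma (p+q)) := by
  rw [← ofReal_integral_eq_lintegral_ofReal (betaRealInt hp hq)
    ((ae_restrict_mem measurableSet_Ioo).mono fun t ht => by
      have h1 : (0:ℝ) ≤ t ^ (p-1) := Real.rpow_nonneg ht.1.le _
      have h2 : (0:ℝ) ≤ (1-t) ^ (q-1) := Real.rpow_nonneg (by linarith [ht.2]) _
      exact mul_nonneg h1 h2),
    betaRealVal hp hq]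

lemma measRpow (c d : ℝ) : Measurable (fun t : ℝ => ENNReal.ofReal (t ^ c * (1-t) ^ d)) := by
  fun_prop

lemma master (Δ μ : ℝ) (hΔ0 : 0 < Δ) (hΔ : Δ < 1 / 2) (hμ : 0 ≤ μ) :
    ∑' n : ℕ, ENNReal.ofReal (Real.Gamma (Δ + n + μ) * Real.Gamma (Δ + n) /
        (Real.Gamma (1 + n + μ) * Real.Gamma (1 + n)))
      = ENNReal.ofReal (Real.Gamma Δ * Real.Gamma (Δ + μ) * Real.Gamma (1 - 2*Δ) /
        (Real.Gamma (1 - Δ) * Real.Gamma (1 + μ - Δ))) := by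
  set T : ℕ → ℝ := fun n => Real.Gamma (Δ + n + μ) * Real.Gamma (Δ + n) /
        (Real.Gamma (1 + n + μ) * Real.Gamma (1 + n)) with hT
  set G : ℕ → ℝ → ℝ → ℝ≥0∞ := fun n t u =>
    ENNReal.ofReal ((n ! : ℝ)⁻¹ * (t ^ ((Δ + n + μ) - 1) * (1 - t) ^ ((1 - Δ) - 1))) *
    ENNReal.ofReal (Real.exp (-u) * u ^ ((Δ + n) - 1)) with hG
  have hΔn : ∀ n : ℕ, (0:ℝ) < Δ + n := fun n => by positivity
  have hfac : ∀ n : ℕ, (0:ℝ) < n ! := fun n => by positivity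
  -- inner u-integral
  have hInner : ∀ (n : ℕ) (t : ℝ), (∫⁻ u in Ioi (0:ℝ), G n t u)
      = ENNReal.ofReal ((n ! : ℝ)⁻¹ * (t ^ ((Δ + n + μ) - 1) * (1 - t) ^ ((1 - Δ) - 1))) *
        ENNReal.ofReal (Real.Gamma (Δ + n)) := by
    intro n t
    rw [hG]
    rw [lintegral_const_mul' _ _ ENNReal.ofReal_ne_top]
    congr 1
    have h := scaledGammaL (hΔn n) one_pos
    simpa using h
  -- step 1 : the double integral of G n equals Γ(1-Δ) * T n
  have step1 : ∀ n : ℕ, (∫⁻ t in Ioo (0:ℝ) 1, ∫⁻ u in Ioi (0:ℝ), G n t u)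
      = ENNReal.ofReal (Real.Gamma (1 - Δ)) * ENNReal.ofReal (T n) := by
    intro n
    simp only [hInner]
    rw [lintegral_mul_const' _ _ ENNReal.ofReal_ne_top]
    have hsplit : ∀ t : ℝ, ENNReal.ofReal ((n ! : ℝ)⁻¹ *
          (t ^ ((Δ + n + μ) - 1) * (1 - t) ^ ((1 - Δ) - 1)))
        = ENNReal.ofReal ((n ! : ℝ)⁻¹) *
          ENNReal.ofReal (t ^ ((Δ + n + μ) - 1) * (1 - t) ^ ((1 - Δ) - 1)) := fun t =>
      ENNReal.ofReal_mul (by positivity)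
    simp only [hsplit]
    rw [lintegral_const_mul' _ _ ENNReal.ofReal_ne_top]
    rw [betaL (by positivity : (0:ℝ) < Δ + n + μ) (by linarith : (0:ℝ) < 1 - Δ)]
    rw [show (Δ + (n:ℝ) + μ) + (1 - Δ) = 1 + n + μ by ring]
    have g1 : (0:ℝ) < Real.Gamma (Δ + n + μ) := Real.Gamma_pos_of_pos (by positivity)
    have g2 : (0:ℝ) < Real.Gamma (1 - Δ) := Real.Gamma_pos_of_pos (by linarith)
    have g3 : (0:ℝ) < Real.Gamma (1 + n + μ) := Real.Gamma_pos_of_pos (by positivity)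
    have g4 : (0:ℝ) < Real.Gamma (Δ + n) := Real.Gamma_pos_of_pos (hΔn n)
    rw [← ENNReal.ofReal_mul (by positivity),
      ← ENNReal.ofReal_mul (by positivity),
      ← ENNReal.ofReal_mul g2.le]
    congr 1
    have h1 : Real.Gamma (1 + n) = n ! := by
      rw [add_comm]; exact_mod_cast Real.Gamma_nat_eq_factorial n
    simp only [hT]
    rw [h1]
    field_simp
  -- step 2 : pointwise tsum over n
  have step2 : ∀ t ∈ Ioo (0:ℝ) 1, ∀ u ∈ Ioi (0:ℝ),
      (∑' n : ℕ, G n t u)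
        = ENNReal.ofReal (t ^ ((Δ + μ) - 1) * (1 - t) ^ ((1 - Δ) - 1)) *
          ENNReal.ofReal (Real.exp (-((1 - t) * u)) * u ^ (Δ - 1)) := by
    intro t ht u hu
    have ht0 : (0:ℝ) < t := ht.1
    have ht1 : (0:ℝ) < 1 - t := by linarith [ht.2]
    have hu0 : (0:ℝ) < u := hu
    have hGn : ∀ n : ℕ, G n t u
        = (ENNReal.ofReal (t ^ ((Δ + μ) - 1) * (1 - t) ^ ((1 - Δ) - 1)) *
           ENNReal.ofReal (Real.exp (-u) * u ^ (Δ - 1))) *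
          ENNReal.ofReal ((t*u) ^ n / (n ! : ℝ)) := by
      intro n
      simp only [hG]
      have e1 : t ^ ((Δ + n + μ) - 1) = t ^ ((Δ + μ) - 1) * t ^ n := by
        rw [show (Δ + (n:ℝ) + μ) - 1 = ((Δ + μ) - 1) + n by ring, Real.rpow_add ht0,
          Real.rpow_natCast]
      have e2 : u ^ ((Δ + n) - 1) = u ^ (Δ - 1) * u ^ n := by
        rw [show (Δ + (n:ℝ)) - 1 = (Δ - 1) + n by ring, Real.rpow_add hu0, Real.rpow_natCast]
      rw [e1, e2, ← ENNReal.ofReal_mul (by positivity), ← ENNReal.ofReal_mul (by positivity),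
        ← ENNReal.ofReal_mul (by positivity)]
      congr 1
      rw [mul_pow]
      field_simp
    rw [tsum_congr hGn, ENNReal.tsum_mul_left]
    have hsum : ∑' n : ℕ, ENNReal.ofReal ((t*u) ^ n / (n ! : ℝ))
        = ENNReal.ofReal (Real.exp (t*u)) := by
      rw [← (expSum (t*u)).tsum_eq]
      exact (ENNReal.ofReal_tsum_of_nonneg (fun n => by positivity)
        (expSum (t*u)).summable).symm
    rw [hsum, mul_assoc]
    congr 1
    rw [← ENNReal.ofReal_mul (by positivity)]
    congr 1
    rw [show Real.exp (-u) * u ^ (Δ - 1) * Real.exp (t*u)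
        = (Real.exp (-u) * Real.exp (t*u)) * u ^ (Δ - 1) by ring, ← Real.exp_add]
    congr 2
    ring
  -- measurability
  have hmeasInner : ∀ n : ℕ, AEMeasurable (fun t : ℝ => ∫⁻ u in Ioi (0:ℝ), G n t u)
      (volume.restrict (Ioo (0:ℝ) 1)) := by
    intro n
    simp only [hInner]
    fun_prop
  have hmeasG : ∀ (t : ℝ) (n : ℕ), AEMeasurable (fun u : ℝ => G n t u)
      (volume.restrict (Ioi (0:ℝ))) := by
    intro t n; simp only [hG]; fun_prop
  -- swap sum and t-integral
  have swap1 : ∑' n : ℕ, ∫⁻ t in Ioo (0:ℝ) 1, ∫⁻ u in Ioi (0:ℝ), G n t u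
      = ∫⁻ t in Ioo (0:ℝ) 1, ∑' n : ℕ, ∫⁻ u in Ioi (0:ℝ), G n t u :=
    (lintegral_tsum hmeasInner).symm
  -- evaluate the t-integral
  have key : (∫⁻ t in Ioo (0:ℝ) 1, ∑' n : ℕ, ∫⁻ u in Ioi (0:ℝ), G n t u)
      = ENNReal.ofReal (Real.Gamma Δ) *
        ENNReal.ofReal (Real.Gamma (Δ + μ) * Real.Gamma (1 - 2*Δ) / Real.Gamma (1 + μ - Δ)) := by
    have hcong : ∀ t ∈ Ioo (0:ℝ) 1, (∑' n : ℕ, ∫⁻ u in Ioi (0:ℝ), G n t u)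
        = ENNReal.ofReal (Real.Gamma Δ) *
          ENNReal.ofReal (t ^ ((Δ + μ) - 1) * (1 - t) ^ ((1 - 2*Δ) - 1)) := by
      intro t ht
      have ht0 : (0:ℝ) < t := ht.1
      have ht1 : (0:ℝ) < 1 - t := by linarith [ht.2]
      rw [← lintegral_tsum (hmeasG t)]
      rw [setLIntegral_congr_fun measurableSet_Ioi
        (fun u hu => step2 t ht u hu)]
      rw [lintegral_const_mul' _ _ ENNReal.ofReal_ne_top]
      rw [scaledGammaL hΔ0 ht1]
      rw [← ENNReal.ofReal_mul (by positivity)]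
      have gΔ : (0:ℝ) < Real.Gamma Δ := Real.Gamma_pos_of_pos hΔ0
      rw [← ENNReal.ofReal_mul gΔ.le]
      congr 1
      have e3 : (1-t) ^ ((1-Δ)-1) = (1-t) ^ (-Δ) := by
        rw [show (1-Δ)-1 = -Δ by ring]
      have e4 : (1-t) ^ (-Δ) * (1-t) ^ (-Δ) = (1-t) ^ ((1-2*Δ)-1) := by
        rw [← Real.rpow_add ht1, show -Δ + -Δ = (1-2*Δ)-1 by ring]
      have e5 : Real.Gamma Δ / (1-t) ^ Δ = Real.Gamma Δ * (1-t) ^ (-Δ) := by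
        rw [Real.rpow_neg ht1.le, div_eq_mul_inv]
      rw [e3, e5, ← e4]
      ring
    rw [setLIntegral_congr_fun measurableSet_Ioo hcong]
    rw [lintegral_const_mul' _ _ ENNReal.ofReal_ne_top]
    rw [betaL (by positivity : (0:ℝ) < Δ + μ) (by linarith : (0:ℝ) < 1 - 2*Δ)]
    rw [show (Δ + μ) + (1 - 2*Δ) = 1 + μ - Δ by ring]
  -- put everything together
  have main : ENNReal.ofReal (Real.Gamma (1 - Δ)) *
      (∑' n : ℕ, ENNReal.ofReal (T n))
      = ENNReal.ofReal (Real.Gamma Δ) *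
        ENNReal.ofReal (Real.Gamma (Δ + μ) * Real.Gamma (1 - 2*Δ) / Real.Gamma (1 + μ - Δ)) := by
    rw [← ENNReal.tsum_mul_left]
    calc ∑' n : ℕ, ENNReal.ofReal (Real.Gamma (1-Δ)) * ENNReal.ofReal (T n)
        = ∑' n : ℕ, ∫⁻ t in Ioo (0:ℝ) 1, ∫⁻ u in Ioi (0:ℝ), G n t u := by
          exact tsum_congr fun n => (step1 n).symm
      _ = _ := swap1.trans key
  have g2 : (0:ℝ) < Real.Gamma (1 - Δ) := Real.Gamma_pos_of_pos (by linarith)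
  have hne : ENNReal.ofReal (Real.Gamma (1 - Δ)) ≠ 0 := by
    simp [ENNReal.ofReal_eq_zero, not_le, g2]
  have gΔ : (0:ℝ) < Real.Gamma Δ := Real.Gamma_pos_of_pos hΔ0
  have g5 : (0:ℝ) < Real.Gamma (1 + μ - Δ) := Real.Gamma_pos_of_pos (by linarith)
  have hRHS : ENNReal.ofReal (Real.Gamma Δ) *
      ENNReal.ofReal (Real.Gamma (Δ + μ) * Real.Gamma (1 - 2*Δ) / Real.Gamma (1 + μ - Δ))
      = ENNReal.ofReal (Real.Gamma (1 - Δ)) *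
        ENNReal.ofReal (Real.Gamma Δ * Real.Gamma (Δ + μ) * Real.Gamma (1 - 2*Δ) /
          (Real.Gamma (1 - Δ) * Real.Gamma (1 + μ - Δ))) := by
    rw [← ENNReal.ofReal_mul gΔ.le, ← ENNReal.ofReal_mul g2.le]
    congr 1
    field_simp
  exact (ENNReal.mul_right_inj hne ENNReal.ofReal_ne_top).mp (main.trans hRHS)

theorem gauss_sum_gamma_ratio (Δ μ : ℝ) (hΔ0 : 0 < Δ) (hΔ : Δ < 1 / 2) (hμ : 0 ≤ μ) :
    Summable (fun n : ℕ =>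
      Real.Gamma (Δ + n + μ) * Real.Gamma (Δ + n) /
        (Real.Gamma (1 + n + μ) * Real.Gamma (1 + n))) ∧
    (∑' n : ℕ,
        Real.Gamma (Δ + n + μ) * Real.Gamma (Δ + n) /
          (Real.Gamma (1 + n + μ) * Real.Gamma (1 + n))) =
      Real.Gamma Δ ^ 2 * Real.Gamma (Δ + μ) /
        (2 * Real.cos (Real.pi * Δ) * Real.Gamma (2 * Δ) * Real.Gamma (1 + μ - Δ)) := by
  set T : ℕ → ℝ := fun n => Real.Gamma (Δ + n + μ) * Real.Gamma (Δ + n) /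
        (Real.Gamma (1 + n + μ) * Real.Gamma (1 + n)) with hT
  have hTnn : ∀ n : ℕ, 0 ≤ T n := by
    intro n
    have g1 : (0:ℝ) < Real.Gamma (Δ + n + μ) := Real.Gamma_pos_of_pos (by positivity)
    have g2 : (0:ℝ) < Real.Gamma (Δ + n) := Real.Gamma_pos_of_pos (by positivity)
    have g3 : (0:ℝ) < Real.Gamma (1 + n + μ) := Real.Gamma_pos_of_pos (by positivity)
    have g4 : (0:ℝ) < Real.Gamma (1 + n) := Real.Gamma_pos_of_pos (by positivity)
    positivity
  have hmaster := master Δ μ hΔ0 hΔ hμ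
  set S : ℝ := Real.Gamma Δ * Real.Gamma (Δ + μ) * Real.Gamma (1 - 2*Δ) /
      (Real.Gamma (1 - Δ) * Real.Gamma (1 + μ - Δ)) with hS
  have gΔ : (0:ℝ) < Real.Gamma Δ := Real.Gamma_pos_of_pos hΔ0
  have gm : (0:ℝ) < Real.Gamma (Δ + μ) := Real.Gamma_pos_of_pos (by positivity)
  have g12 : (0:ℝ) < Real.Gamma (1 - 2*Δ) := Real.Gamma_pos_of_pos (by linarith)
  have g1Δ : (0:ℝ) < Real.Gamma (1 - Δ) := Real.Gamma_pos_of_pos (by linarith)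
  have g1μ : (0:ℝ) < Real.Gamma (1 + μ - Δ) := Real.Gamma_pos_of_pos (by linarith)
  have g2Δ : (0:ℝ) < Real.Gamma (2*Δ) := Real.Gamma_pos_of_pos (by linarith)
  have hS0 : 0 ≤ S := by positivity
  have hfin : (∑' n : ℕ, ENNReal.ofReal (T n)) ≠ ⊤ := by
    rw [hmaster]; exact ENNReal.ofReal_ne_top
  have hsummable : Summable T := by
    have h := ENNReal.summable_toReal hfin
    refine h.congr fun n => ?_
    exact ENNReal.toReal_ofReal (hTnn n)
  have htsum : ∑' n : ℕ, T n = S := by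
    calc ∑' n : ℕ, T n = ∑' n : ℕ, (ENNReal.ofReal (T n)).toReal :=
          tsum_congr fun n => (ENNReal.toReal_ofReal (hTnn n)).symm
      _ = (∑' n : ℕ, ENNReal.ofReal (T n)).toReal :=
          (ENNReal.tsum_toReal_eq fun n => ENNReal.ofReal_ne_top).symm
      _ = (ENNReal.ofReal S).toReal := by rw [hmaster]
      _ = S := ENNReal.toReal_ofReal hS0
  refine ⟨hsummable, htsum.trans ?_⟩
  -- reflection formula algebra
  have hπΔ0 : 0 < Real.pi * Δ := by positivity
  have hπΔ1 : Real.pi * Δ < Real.pi / 2 := by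
    nlinarith [Real.pi_pos]
  have hsin : (0:ℝ) < Real.sin (Real.pi * Δ) :=
    Real.sin_pos_of_pos_of_lt_pi hπΔ0 (by linarith [Real.pi_pos])
  have hcos : (0:ℝ) < Real.cos (Real.pi * Δ) :=
    Real.cos_pos_of_mem_Ioo ⟨by linarith [Real.pi_pos], hπΔ1⟩
  have hsin2 : (0:ℝ) < Real.sin (Real.pi * (2*Δ)) := by
    apply Real.sin_pos_of_pos_of_lt_pi (by positivity)
    nlinarith [Real.pi_pos]
  have r1 := Real.Gamma_mul_Gamma_one_sub (2*Δ)
  have r2 := Real.Gamma_mul_Gamma_one_sub Δ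
  have r1' : Real.Gamma (2*Δ) * Real.Gamma (1 - 2*Δ) * Real.sin (Real.pi * (2*Δ)) = Real.pi := by
    rw [r1, div_mul_cancel₀ _ hsin2.ne']
  have r2' : Real.Gamma Δ * Real.Gamma (1 - Δ) * Real.sin (Real.pi * Δ) = Real.pi := by
    rw [r2]; field_simp
  have s2 : Real.sin (Real.pi * (2*Δ)) =
      2 * Real.sin (Real.pi * Δ) * Real.cos (Real.pi * Δ) := by
    rw [show Real.pi * (2*Δ) = 2 * (Real.pi * Δ) by ring, Real.sin_two_mul]
  have key2 : 2 * Real.cos (Real.pi * Δ) * Real.Gamma (2*Δ) * Real.Gamma (1 - 2*Δ)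
      = Real.Gamma Δ * Real.Gamma (1 - Δ) := by
    apply mul_right_cancel₀ hsin.ne'
    linear_combination r1' - r2' - Real.Gamma (2*Δ) * Real.Gamma (1 - 2*Δ) * s2
  rw [hS, div_eq_div_iff (by positivity) (by positivity)]
  linear_combination Real.Gamma Δ * Real.Gamma (Δ + μ) * Real.Gamma (1 + μ - Δ) * key2
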